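/- Let F be a finite field, let m ≤ n be positive integers, and let A be a random m×n matrix over F whose entries are mutually independent and uniformly distributed on F. Then the probability that A is not of full row rank satisfies P( rank(A) < m ) ≤ |F|^{−(n−m)} / (|F| − 1). -/

import Mathlib

open Finset Matrix

attribute [local instance] Classical.propDecidable

section Aux
variable {F : Type} [Field F] [Fintype F] {m n : ℕ}

/-- Rank deficiency iff a nontrivial left kernel vector exists. -/
lemma aux_rank_lt_iff (A : Matrix (Fin m) (Fin n) F) :
    A.rank < m ↔ ∃ x : Fin m → F, x ≠ 0 ∧ x ᵥ* A = 0 := by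
  classical
  constructor
  · intro h
    by_contra hc
    push_neg at hc
    have hinj : Function.Injective A.vecMul := by
      rw [← Matrix.coe_vecMulLinear, ← LinearMap.ker_eq_bot]
      by_contra hne
      obtain ⟨x, hx, hx0⟩ := (Submodule.ne_bot_iff _).mp hne
      exact hc x hx0 (by simpa using hx)
    have hLI := Matrix.vecMul_injective_iff.mp hinj
    have h2 : A.rank = Fintype.card (Fin m) := LinearIndependent.rank_matrix (M := A) hLI
    simp only [Fintype.card_fin] at h2
    omega
  · rintro ⟨x, hx0, hx⟩
    have hni : ¬ LinearIndependent F (fun i => A i) := by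
      intro hLI
      have hinj := Matrix.vecMul_injective_iff.mpr hLI
      apply hx0
      apply hinj
      simpa [Matrix.zero_vecMul] using hx
    have hle : A.rank ≤ m := by simpa using A.rank_le_height
    rcases lt_or_eq_of_le hle with h | h
    · exact h
    · exfalso
      apply hni
      rw [linearIndependent_iff_card_eq_finrank_span, Fintype.card_fin]
      have h2 := A.rank_eq_finrank_span_row
      rw [h] at h2
      exact h2

/-- Count of matrices killed by a fixed nonzero left vector. -/
lemma aux_ker_count (x : Fin m → F) (hx : x ≠ 0) :
    #{A : Matrix (Fin m) (Fin n) F | x ᵥ* A = 0} * Fintype.card F ^ n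
      = Fintype.card F ^ (m * n) := by
  classical
  obtain ⟨i₀, hi₀⟩ : ∃ i, x i ≠ 0 := by
    by_contra hc; push_neg at hc; exact hx (funext hc)
  let φ : Matrix (Fin m) (Fin n) F →ₗ[F] (Fin n → F) :=
    { toFun := fun A => x ᵥ* A
      map_add' := fun A B => Matrix.vecMul_add A B x
      map_smul' := by
        intro c A
        ext j
        simp only [Matrix.vecMul, dotProduct, RingHom.id_apply, Pi.smul_apply,
          Matrix.smul_apply, smul_eq_mul, Finset.mul_sum]
        exact Finset.sum_congr rfl fun i _ => by ring }
  have hsurj : Function.Surjective φ.toAddMonoidHom := by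
    intro y
    refine ⟨Matrix.of fun i j => if i = i₀ then (x i₀)⁻¹ * y j else 0, ?_⟩
    ext j
    simp only [LinearMap.toAddMonoidHom_coe, LinearMap.coe_mk, AddHom.coe_mk, φ,
      Matrix.vecMul, dotProduct, Matrix.of_apply, mul_ite, mul_zero,
      Finset.sum_ite_eq', Finset.mem_univ, if_true]
    field_simp
  have hcard := AddSubgroup.card_eq_card_quotient_mul_card_addSubgroup
    (φ.toAddMonoidHom.ker)
  have hquot : Nat.card (Matrix (Fin m) (Fin n) F ⧸ φ.toAddMonoidHom.ker)
      = Fintype.card F ^ n := by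
    rw [Nat.card_congr (QuotientAddGroup.quotientKerEquivOfSurjective _ hsurj).toEquiv]
    simp [Nat.card_eq_fintype_card]
  have hkercard : Nat.card φ.toAddMonoidHom.ker
      = #{A : Matrix (Fin m) (Fin n) F | x ᵥ* A = 0} := by
    rw [Nat.card_eq_fintype_card]
    rw [← Fintype.card_subtype]
    apply Fintype.card_congr
    apply Equiv.subtypeEquivRight
    intro A
    simp [AddMonoidHom.mem_ker, φ]
  have hM : Nat.card (Matrix (Fin m) (Fin n) F) = Fintype.card F ^ (m * n) := by
    rw [Nat.card_eq_fintype_card]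
    rw [Fintype.card_congr (Matrix.of : (Fin m → Fin n → F) ≃ _).symm]
    simp [pow_mul, mul_comm m n]
  rw [hM, hquot, hkercard] at hcard
  exact (Nat.mul_comm _ _).trans hcard.symm

end Aux

/-- Let `F` be a finite field, `m ≤ n` positive integers, and `A` a
uniformly random `m×n` matrix over `F` (mutually independent uniform entries). Then
`P(rank(A) < m) ≤ |F|^{−(n−m)} / (|F| − 1)`. -/
theorem random_matrix_full_rank {F : Type} [Field F] [Fintype F] {m n : ℕ}
    (hm : 0 < m) (hmn : m ≤ n) :
    ((Nat.card {A : Matrix (Fin m) (Fin n) F // A.rank < m}) : ℝ) /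
      (Fintype.card (Matrix (Fin m) (Fin n) F) : ℝ)
    ≤ ((Fintype.card F : ℝ) ^ (n - m))⁻¹ / ((Fintype.card F : ℝ) - 1) := by
  classical
  set q := Fintype.card F with hq
  have hq2 : 2 ≤ q := Fintype.one_lt_card
  set bad : Finset (Matrix (Fin m) (Fin n) F) := {A | A.rank < m} with hbad
  set T : Finset ((Fin m → F) × Matrix (Fin m) (Fin n) F) :=
    {p | p.1 ≠ 0 ∧ p.1 ᵥ* p.2 = 0} with hT
  set K : ℕ := q ^ (m * n - n) with hK
  have hKq : K * q ^ n = q ^ (m * n) := by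
    rw [hK, ← pow_add]
    congr 1
    have : n ≤ m * n := Nat.le_mul_of_pos_left n hm
    omega
  -- fiber counts over first coordinate
  have hfiber : ∀ x : Fin m → F, x ≠ 0 →
      #{A : Matrix (Fin m) (Fin n) F | x ᵥ* A = 0} = K := by
    intro x hx
    have h1 := aux_ker_count (n := n) x hx
    have hqn : 0 < q ^ n := pow_pos (by omega) n
    rw [← hKq] at h1
    exact Nat.eq_of_mul_eq_mul_right hqn h1
  -- lower bound : (q-1) * #bad ≤ #T
  have h1 : (q - 1) * bad.card ≤ T.card := by
    apply Finset.mul_card_image_le_card_of_maps_to (f := Prod.snd) (t := bad)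
    · rintro ⟨x, A⟩ hp
      simp only [hT, Finset.mem_filter, Finset.mem_univ, true_and] at hp
      simp only [hbad, Finset.mem_filter, Finset.mem_univ, true_and]
      exact (aux_rank_lt_iff A).mpr ⟨x, hp.1, hp.2⟩
    · intro A hA
      simp only [hbad, Finset.mem_filter, Finset.mem_univ, true_and] at hA
      obtain ⟨x₀, hx₀, hker0⟩ := (aux_rank_lt_iff A).mp hA
      have hle : Fintype.card Fˣ ≤ #{p ∈ T | p.2 = A} := by
        apply Finset.card_le_card_of_injOn (fun u : Fˣ => ((u : F) • x₀, A))
        · intro u _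
          refine Finset.mem_filter.mpr ⟨Finset.mem_filter.mpr
            ⟨Finset.mem_univ _, smul_ne_zero (Units.ne_zero u) hx₀, ?_⟩, rfl⟩
          rw [Matrix.smul_vecMul, hker0, smul_zero]
        · intro u _ v _ h
          have h2 : (u : F) • x₀ = (v : F) • x₀ := congrArg Prod.fst h
          exact Units.ext (smul_left_injective F hx₀ h2)
      calc q - 1 = Fintype.card Fˣ := (Fintype.card_units (α := F)).symm
        _ ≤ _ := hle
  -- upper bound : #T ≤ K * q^m
  have h2 : T.card ≤ K * q ^ m := by
    calc T.card ≤ K * #(T.image Prod.fst) := by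
          apply Finset.card_le_mul_card_image
          intro x hx
          simp only [Finset.mem_image] at hx
          obtain ⟨⟨x', A'⟩, hp, rfl⟩ := hx
          simp only [hT, Finset.mem_filter, Finset.mem_univ, true_and] at hp
          rw [← hfiber _ hp.1]
          apply Finset.card_le_card_of_injOn Prod.snd
          · rintro ⟨y, B⟩ hb
            simp only [Finset.mem_coe, Finset.mem_filter, Finset.mem_univ, true_and, hT] at hb ⊢
            obtain ⟨⟨hy0, hyB⟩, hy⟩ := hb
            subst hy
            exact hyB
          · rintro ⟨y, B⟩ hb ⟨z, C⟩ hc hbc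
            simp only [Finset.coe_filter, Set.mem_setOf_eq] at hb hc
            simp only at hbc
            rw [Prod.ext_iff]
            exact ⟨hb.2.trans hc.2.symm, hbc⟩
      _ ≤ K * q ^ m := by
          apply Nat.mul_le_mul_left
          calc #(T.image Prod.fst) ≤ Fintype.card (Fin m → F) :=
                Finset.card_le_univ _
            _ = q ^ m := by simp [hq]
  -- combine in ℕ : (q-1) * #bad * q^n ≤ q^m * q^(m*n)
  have h3 : (q - 1) * bad.card * q ^ n ≤ q ^ m * q ^ (m * n) := by
    calc (q - 1) * bad.card * q ^ n ≤ T.card * q ^ n :=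
          Nat.mul_le_mul_right _ h1
      _ ≤ K * q ^ m * q ^ n := Nat.mul_le_mul_right _ h2
      _ = q ^ m * (K * q ^ n) := by ring
      _ = q ^ m * q ^ (m * n) := by rw [hKq]
  -- cast to ℝ
  have hNat : (Nat.card {A : Matrix (Fin m) (Fin n) F // A.rank < m}) = bad.card := by
    rw [Nat.card_eq_fintype_card, Fintype.card_subtype]
  have hMcard : (Fintype.card (Matrix (Fin m) (Fin n) F) : ℝ) = (q : ℝ) ^ (m * n) := by
    rw [show Fintype.card (Matrix (Fin m) (Fin n) F) = q ^ (m * n) by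
      rw [Fintype.card_congr (Matrix.of : (Fin m → Fin n → F) ≃ _).symm]
      simp [hq, pow_mul, mul_comm m n]]
    push_cast
    ring
  rw [hNat, hMcard]
  set Q : ℝ := (q : ℝ) with hQ
  have hQ2 : (2 : ℝ) ≤ Q := by rw [hQ]; exact_mod_cast hq2
  have hQ1 : (1 : ℝ) < Q := by linarith
  have hQpos : (0 : ℝ) < Q := by linarith
  have h3R : (Q - 1) * (bad.card : ℝ) * Q ^ n ≤ Q ^ m * Q ^ (m * n) := by
    have := h3
    have hc : ((q - 1 : ℕ) : ℝ) = Q - 1 := by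
      have : 1 ≤ q := by omega
      push_cast [this]
      ring
    calc (Q - 1) * (bad.card : ℝ) * Q ^ n
        = (((q - 1) * bad.card * q ^ n : ℕ) : ℝ) := by push_cast [hc]; ring
      _ ≤ (((q ^ m * q ^ (m * n) : ℕ)) : ℝ) := by exact_mod_cast h3
      _ = Q ^ m * Q ^ (m * n) := by push_cast; ring
  have hpow : Q ^ (n - m) * Q ^ m = Q ^ n := by
    rw [← pow_add]
    congr 1
    omega
  rw [div_le_div_iff₀ (by positivity) (by linarith)]
  rw [inv_mul_eq_div, le_div_iff₀ (by positivity)]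
  -- goal : bad.card * (Q - 1) * Q ^ (n - m) ≤ Q ^ (m * n)
  have hcancel : (bad.card : ℝ) * (Q - 1) * Q ^ (n - m) * Q ^ m ≤ Q ^ (m * n) * Q ^ m := by
    calc (bad.card : ℝ) * (Q - 1) * Q ^ (n - m) * Q ^ m
        = (Q - 1) * (bad.card : ℝ) * (Q ^ (n - m) * Q ^ m) := by ring
      _ = (Q - 1) * (bad.card : ℝ) * Q ^ n := by rw [hpow]
      _ ≤ Q ^ m * Q ^ (m * n) := h3R
      _ = Q ^ (m * n) * Q ^ m := by ring
  exact le_of_mul_le_mul_right hcancel (by positivity)
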